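/- Let R be a commutative Noetherian local ring and M a finitely generated R-module. Then M is horizontally linked if and only if M is stable and M is a first syzygy module (i.e., M embeds into a finitely generated free R-module). -/
import Mathlib


open CategoryTheory

noncomputable section

universe u

variable (R : Type u) [CommRing R]

/-- The Ext group `Ext^n_R(M, N)`. -/
abbrev ExtGrp (M N : Type u) [AddCommGroup M] [Module R M] [AddCommGroup N] [Module R N]
    (n : ℕ) : Type u :=
  ↥(((Ext R (ModuleCat.{u} R) n).obj (Opposite.op (ModuleCat.of R M))).obj (ModuleCat.of R N))

/-- The Tor group `Tor_n^R(M, N)`. -/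
abbrev TorGrp (M N : Type u) [AddCommGroup M] [Module R M] [AddCommGroup N] [Module R N]
    (n : ℕ) : Type u :=
  ↥(((Tor (ModuleCat.{u} R) n).obj (ModuleCat.of R M)).obj (ModuleCat.of R N))

/-- The `i`-th local cohomology of `M` with support in `V(J)`. -/
abbrev LocalCohomologyGrp (J : Ideal R) (i : ℕ) (M : Type u) [AddCommGroup M] [Module R M] :
    Type u :=
  ↥((localCohomology J i).obj (ModuleCat.of R M))

/-- The depth of a module over a local ring: the supremum of lengths of regular
sequences contained in the maximal ideal. -/
def moduleDepth [IsLocalRing R] (M : Type u) [AddCommGroup M] [Module R M] : ℕ∞ :=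
  sSup {n : ℕ∞ | ∃ rs : List R, (rs.length : ℕ∞) = n ∧
    (∀ r ∈ rs, r ∈ IsLocalRing.maximalIdeal R) ∧ RingTheory.Sequence.IsRegular M rs}

/-- The grade of an ideal: the supremum of lengths of regular sequences on `R` contained in it. -/
def idealGrade (I : Ideal R) : ℕ∞ :=
  sSup {n : ℕ∞ | ∃ rs : List R, (rs.length : ℕ∞) = n ∧
    (∀ r ∈ rs, r ∈ I) ∧ RingTheory.Sequence.IsRegular R rs}

/-- The Krull dimension of a module, i.e. the dimension of `R / ann M`. -/
def moduleKrullDim (M : Type u) [AddCommGroup M] [Module R M] : WithBot ℕ∞ :=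
  ringKrullDim (R ⧸ Module.annihilator R M)

/-- A local ring is Cohen-Macaulay if its depth equals its Krull dimension. -/
def IsCohenMacaulayLocalRing [IsLocalRing R] : Prop :=
  (moduleDepth R R : WithBot ℕ∞) = ringKrullDim R

/-- A module over a local ring is Cohen-Macaulay if its depth equals its dimension. -/
def IsCohenMacaulayModule [IsLocalRing R] (M : Type u) [AddCommGroup M] [Module R M] : Prop :=
  (moduleDepth R M : WithBot ℕ∞) = moduleKrullDim R M

/-- A module over a local ring is maximal Cohen-Macaulay if its depth equals `dim R`. -/
def IsMaximalCohenMacaulay [IsLocalRing R] (M : Type u) [AddCommGroup M] [Module R M] : Prop :=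
  (moduleDepth R M : WithBot ℕ∞) = ringKrullDim R

/-- A local ring is Gorenstein if it has finite injective dimension over itself, expressed by
uniform vanishing of `Ext^i(-, R)` for large `i`. -/
def IsGorensteinLocalRing [IsLocalRing R] : Prop :=
  ∃ n : ℕ, ∀ (N : ModuleCat.{u} R) (i : ℕ), n < i → Subsingleton (ExtGrp R ↥N R i)

/-- A (not necessarily local) ring is Cohen-Macaulay if all its localizations at primes are
Cohen-Macaulay local rings. -/
def IsCohenMacaulayRing : Prop :=
  ∀ (p : Ideal R) [p.IsPrime], IsCohenMacaulayLocalRing (Localization.AtPrime p)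

/-- A ring is generically Gorenstein if its localizations at all minimal primes are Gorenstein. -/
def IsGenericallyGorenstein : Prop :=
  ∀ (p : Ideal R) [p.IsPrime], p ∈ minimalPrimes R →
    IsGorensteinLocalRing (Localization.AtPrime p)

/-- Serre's condition `(S_n)`. -/
def SatisfiesSerre (n : ℕ) (M : Type u) [AddCommGroup M] [Module R M] : Prop :=
  ∀ (p : Ideal R) [p.IsPrime],
    min (n : WithBot ℕ∞) (ringKrullDim (Localization.AtPrime p)) ≤
      (moduleDepth (Localization.AtPrime p) (LocalizedModule p.primeCompl M) : WithBot ℕ∞)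

/-- The condition `S̃_n`: `depth M_q ≥ min (n, depth R_q)` for all primes `q`. -/
def SatisfiesSerreTilde (n : ℕ) (M : Type u) [AddCommGroup M] [Module R M] : Prop :=
  ∀ (p : Ideal R) [p.IsPrime],
    min (n : ℕ∞) (moduleDepth (Localization.AtPrime p) (Localization.AtPrime p)) ≤
      moduleDepth (Localization.AtPrime p) (LocalizedModule p.primeCompl M)

/-- A minimal free presentation `P₁ → P₀ → M → 0` of a module over a local ring. -/
structure MinFreePres [IsLocalRing R] (M : Type u) [AddCommGroup M] [Module R M] where
  n0 : ℕ
  n1 : ℕ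
  d : (Fin n1 → R) →ₗ[R] (Fin n0 → R)
  π : (Fin n0 → R) →ₗ[R] M
  surj : Function.Surjective π
  exact : Function.Exact d π
  min0 : LinearMap.ker π ≤ (IsLocalRing.maximalIdeal R) • (⊤ : Submodule R (Fin n0 → R))
  min1 : LinearMap.ker d ≤ (IsLocalRing.maximalIdeal R) • (⊤ : Submodule R (Fin n1 → R))

variable {R}

/-- `λM = Ω Tr M`: the image of the dualized presentation map `P₀* → P₁*`. -/
abbrev MinFreePres.Lambda [IsLocalRing R] {M : Type u} [AddCommGroup M] [Module R M]
    (p : MinFreePres R M) : Type u :=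
  ↥(LinearMap.range p.d.dualMap)

/-- The Auslander transpose `Tr M`: the cokernel of the dualized map `P₀* → P₁*`. -/
abbrev MinFreePres.Tr [IsLocalRing R] {M : Type u} [AddCommGroup M] [Module R M]
    (p : MinFreePres R M) : Type u :=
  (Module.Dual R (Fin p.n1 → R)) ⧸ (LinearMap.range p.d.dualMap)

variable (R)

/-- `M` and `N` are horizontally linked: `M ≅ λN` and `N ≅ λM`. -/
def HorizontallyLinkedPair [IsLocalRing R] (M N : Type u) [AddCommGroup M] [Module R M]
    [AddCommGroup N] [Module R N] : Prop :=
  (∃ p : MinFreePres R N, Nonempty (M ≃ₗ[R] p.Lambda)) ∧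
  (∃ p : MinFreePres R M, Nonempty (N ≃ₗ[R] p.Lambda))

/-- `M` is horizontally linked, i.e. `M ≅ λλM`. -/
def IsHorizontallyLinked [IsLocalRing R] (M : Type u) [AddCommGroup M] [Module R M] : Prop :=
  ∃ (p : MinFreePres R M) (q : MinFreePres R p.Lambda), Nonempty (M ≃ₗ[R] q.Lambda)

/-- A module is stable if it has no nonzero free direct summand. -/
def IsStable (M : Type u) [AddCommGroup M] [Module R M] : Prop :=
  ∀ (N N' : Submodule R M), IsCompl N N' → Module.Free R ↥N → N = ⊥

/-- A module is a (first) syzygy if it embeds into a finitely generated free module. -/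
def IsFirstSyzygy (M : Type u) [AddCommGroup M] [Module R M] : Prop :=
  ∃ (k : ℕ) (f : M →ₗ[R] (Fin k → R)), Function.Injective f

/-- `M` is an `n`-th syzygy module. -/
def IsNthSyzygy : ℕ → ModuleCat.{u} R → Prop
  | 0, _ => True
  | n + 1, M => ∃ (k : ℕ) (f : M →ₗ[R] (Fin k → R)), Function.Injective f ∧
      IsNthSyzygy n (ModuleCat.of R ((Fin k → R) ⧸ LinearMap.range f))

/-- `M` is totally `C`-reflexive. -/
def IsTotallyReflexive (C M : Type u) [AddCommGroup C] [Module R C]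
    [AddCommGroup M] [Module R M] : Prop :=
  Function.Bijective ((LinearMap.id : (M →ₗ[R] C) →ₗ[R] (M →ₗ[R] C)).flip) ∧
  (∀ i : ℕ, 0 < i → Subsingleton (ExtGrp R M C i)) ∧
  (∀ i : ℕ, 0 < i → Subsingleton (ExtGrp R (M →ₗ[R] C) C i))

/-- `G_C`-dimension of `M` is at most `n`: there is a resolution of length `n` by
totally `C`-reflexive modules. -/
def GdimLE (C : Type u) [AddCommGroup C] [Module R C] : ℕ → ModuleCat.{u} R → Prop
  | 0, M => IsTotallyReflexive R C ↥M
  | n + 1, M => ∃ (K X : ModuleCat.{u} R) (f : K →ₗ[R] X) (g : X →ₗ[R] M),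
      IsTotallyReflexive R C ↥X ∧ Function.Injective f ∧ Function.Surjective g ∧
      Function.Exact f g ∧ GdimLE C n K

/-- `M` has finite `G_C`-dimension. -/
def HasFiniteGdim (C M : Type u) [AddCommGroup C] [Module R C] [AddCommGroup M] [Module R M] :
    Prop :=
  ∃ n : ℕ, GdimLE R C n (ModuleCat.of R M)

/-- `G_C`-dim of `M` equals `n`. -/
def GdimEq (C M : Type u) [AddCommGroup C] [Module R C] [AddCommGroup M] [Module R M]
    (n : ℕ) : Prop :=
  GdimLE R C n (ModuleCat.of R M) ∧ ∀ m : ℕ, GdimLE R C m (ModuleCat.of R M) → n ≤ m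

/-- A semidualizing module. -/
def IsSemidualizing (C : Type u) [AddCommGroup C] [Module R C] : Prop :=
  Module.Finite R C ∧ Function.Bijective (LinearMap.lsmul R C) ∧
  ∀ i : ℕ, 0 < i → Subsingleton (ExtGrp R C C i)

/-- A canonical module over a Cohen-Macaulay local ring: a semidualizing module of finite
injective dimension. -/
def IsCanonicalModule [IsLocalRing R] (w : Type u) [AddCommGroup w] [Module R w] : Prop :=
  IsSemidualizing R w ∧
  ∃ n : ℕ, ∀ (N : ModuleCat.{u} R) (i : ℕ), n < i → Subsingleton (ExtGrp R ↥N w i)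

/-- Membership in the Auslander class `A_C`. -/
def InAuslanderClass (C M : Type u) [AddCommGroup C] [Module R C]
    [AddCommGroup M] [Module R M] : Prop :=
  Function.Bijective (TensorProduct.mk R M C) ∧
  (∀ i : ℕ, 0 < i → Subsingleton (TorGrp R M C i)) ∧
  (∀ i : ℕ, 0 < i → Subsingleton (ExtGrp R C (TensorProduct R M C) i))

/-- The attached primes of a module. -/
def attachedPrimes (M : Type u) [AddCommGroup M] [Module R M] : Set (Ideal R) :=
  {p | p.IsPrime ∧ ∃ N : Submodule R M, p = Module.annihilator R (M ⧸ N)}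

/-- An equidimensional ring: `dim R/p = dim R` for every minimal prime `p`. -/
def IsEquidimensionalRing : Prop :=
  ∀ p ∈ minimalPrimes R, ringKrullDim (R ⧸ p) = ringKrullDim R

/-- A formally equidimensional local ring: its completion is equidimensional. -/
def IsFormallyEquidimensional [IsLocalRing R] : Prop :=
  IsEquidimensionalRing (AdicCompletion (IsLocalRing.maximalIdeal R) R)

/-- A witness that `R` is the homomorphic image of a Cohen-Macaulay ring. -/
structure CMImageWitness : Type (u + 1) where
  S : Type u
  [instCommRing : CommRing S]
  [instNoeth : IsNoetherianRing S]
  cm : IsCohenMacaulayRing S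
  f : S →+* R
  surj : Function.Surjective f

/-- `R` is a homomorphic image of a Cohen-Macaulay ring. -/
def IsHomImageOfCM : Prop := Nonempty (CMImageWitness R)



namespace HLinkAux

/-! ### Auxiliary lemmas for statement2 -/

lemma mem_smul_top_pi {n : ℕ} {I : Ideal R} {x : Fin n → R} :
    x ∈ I • (⊤ : Submodule R (Fin n → R)) ↔ ∀ i, x i ∈ I := by
  constructor
  · intro hx i
    refine Submodule.smul_induction_on hx (fun r hr y _ => ?_) (fun a b ha hb => ?_)
    · simpa using I.mul_mem_right (y i) hr
    · simpa using I.add_mem ha hb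
  · intro h
    have hx : x = ∑ i, Pi.single i (x i) := (Finset.univ_sum_single x).symm
    rw [hx]
    refine Submodule.sum_mem _ fun i _ => ?_
    have : Pi.single i (x i) = x i • (Pi.single i (1 : R) : Fin n → R) := by
      ext j; by_cases hj : i = j <;> simp [Pi.single_apply, hj]
    rw [this]
    exact Submodule.smul_mem_smul (h i) trivial

lemma apply_mem_of_mem_smul_top {A : Type u} [AddCommGroup A] [Module R A] {I : Ideal R}
    (f : A →ₗ[R] R) {x : A} (hx : x ∈ I • (⊤ : Submodule R A)) : f x ∈ I := by
  refine Submodule.smul_induction_on hx (fun r hr y _ => ?_) (fun a b ha hb => ?_)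
  · simpa using I.mul_mem_right (f y) hr
  · simpa using I.add_mem ha hb

lemma functional_eq_sum {n : ℕ} (g : (Fin n → R) →ₗ[R] R) (w : Fin n → R) :
    g w = ∑ i, w i * g (Pi.single i 1) := by
  conv_lhs => rw [← Finset.univ_sum_single w]
  rw [map_sum]
  congr 1; ext i
  have : Pi.single i (w i) = w i • (Pi.single i (1 : R) : Fin n → R) := by
    ext j; by_cases hj : i = j <;> simp [Pi.single_apply, hj]
  rw [this, map_smul, smul_eq_mul]

/-- The dot-product bilinear map. -/
def dotL (n : ℕ) : (Fin n → R) →ₗ[R] Module.Dual R (Fin n → R) :=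
  LinearMap.mk₂ R (fun v w => ∑ i, v i * w i)
    (fun m₁ m₂ n => by simp [add_mul, Finset.sum_add_distrib])
    (fun c m n => by simp [Finset.mul_sum, mul_assoc])
    (fun m n₁ n₂ => by simp [mul_add, Finset.sum_add_distrib])
    (fun c m n => by simp [Finset.mul_sum, mul_assoc, mul_left_comm])

variable {R}

lemma dotL_apply {n : ℕ} (v w : Fin n → R) : dotL R n v w = ∑ i, v i * w i := rfl

lemma dotL_comm {n : ℕ} (v w : Fin n → R) : dotL R n v w = dotL R n w v := by
  simp [dotL_apply, mul_comm]

lemma dotL_single {n : ℕ} (v : Fin n → R) (i : Fin n) : dotL R n v (Pi.single i 1) = v i := by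
  rw [dotL_apply]
  rw [Finset.sum_eq_single i] <;> intros <;> simp_all [Pi.single_apply]

variable (R)

/-- The self-duality of `Fin n → R`. -/
def epsEquiv (n : ℕ) : (Fin n → R) ≃ₗ[R] Module.Dual R (Fin n → R) :=
  LinearEquiv.ofLinear (dotL R n)
    (LinearMap.pi fun i => LinearMap.applyₗ (Pi.single i 1))
    (by
      refine LinearMap.ext fun f => LinearMap.ext fun w => ?_
      simp only [LinearMap.comp_apply, LinearMap.id_apply]
      rw [functional_eq_sum R f w, dotL_apply]
      simp [LinearMap.pi_apply, mul_comm])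
    (by
      refine LinearMap.ext fun v => funext fun i => ?_
      simp [LinearMap.pi_apply, dotL_single])

variable {R}

lemma epsEquiv_apply {n : ℕ} (v w : Fin n → R) : epsEquiv R n v w = ∑ i, v i * w i := rfl
lemma epsEquiv_comm {n : ℕ} (v w : Fin n → R) : epsEquiv R n v w = epsEquiv R n w v :=
  dotL_comm v w
lemma epsEquiv_single {n : ℕ} (v : Fin n → R) (i : Fin n) :
    epsEquiv R n v (Pi.single i 1) = v i := dotL_single v i

variable (R)

/-- Insertion map: puts coordinates at positions `≠ i`, with `0` at position `i`. -/
def insMap (n' : ℕ) (i : Fin (n' + 1)) : (Fin n' → R) →ₗ[R] (Fin (n' + 1) → R) where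
  toFun w := ∑ k, w k • (Pi.single (i.succAbove k) (1 : R) : Fin (n' + 1) → R)
  map_add' a b := by simp [add_smul, Finset.sum_add_distrib]
  map_smul' c a := by simp [Finset.smul_sum, smul_smul]

variable {R}

lemma insMap_eq_of_zero {n' : ℕ} {i : Fin (n' + 1)} {z : Fin (n' + 1) → R} (hz : z i = 0) :
    insMap R n' i (fun k => z (i.succAbove k)) = z := by
  funext j
  have : insMap R n' i (fun k => z (i.succAbove k)) j
      = ∑ k, z (i.succAbove k) * (if i.succAbove k = j then (1:R) else 0) := by
    simp [insMap, Finset.sum_apply, Pi.single_apply, eq_comm]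
  rw [this]
  by_cases hj : j = i
  · rw [hj, hz]
    apply Finset.sum_eq_zero
    intro k _
    rw [if_neg (Fin.succAbove_ne i k), mul_zero]
  · obtain ⟨k₀, hk₀⟩ := Fin.exists_succAbove_eq hj
    rw [Finset.sum_eq_single k₀]
    · rw [if_pos hk₀, mul_one, hk₀]
    · intro k _ hk
      have hne : i.succAbove k ≠ j := fun h => hk (Fin.succAbove_right_injective (h.trans hk₀.symm))
      rw [if_neg hne, mul_zero]
    · intro h; exact absurd (Finset.mem_univ k₀) h

lemma drop_generator {X : Type u} [AddCommGroup X] [Module R X] (n : ℕ)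
    (π : (Fin n → R) →ₗ[R] X) (hπ : Function.Surjective π) (v : Fin n → R)
    (hv : π v = 0) (i : Fin n) (hu : IsUnit (v i)) :
    ∃ π' : (Fin (n - 1) → R) →ₗ[R] X, Function.Surjective π' := by
  cases n with
  | zero => exact i.elim0
  | succ n' =>
    show ∃ π' : (Fin n' → R) →ₗ[R] X, Function.Surjective π'
    refine ⟨π ∘ₗ insMap R n' i, fun x => ?_⟩
    obtain ⟨w, rfl⟩ := hπ x
    set z : Fin (n' + 1) → R := w - (w i * ((hu.unit⁻¹ : Rˣ) : R)) • v with hzdef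
    clear_value z
    have hui : ((hu.unit⁻¹ : Rˣ) : R) * v i = 1 := hu.val_inv_mul
    have hzi : z i = 0 := by
      simp only [hzdef, Pi.sub_apply, Pi.smul_apply, smul_eq_mul]
      rw [mul_assoc, hui, mul_one, sub_self]
    refine ⟨fun k => z (i.succAbove k), ?_⟩
    rw [LinearMap.comp_apply]
    have h2 : π ((insMap R n' i) fun k => z (i.succAbove k)) = π z :=
      congrArg (⇑π) (insMap_eq_of_zero hzi)
    rw [h2, hzdef, map_sub, map_smul, hv, smul_zero, sub_zero]

variable (R)

lemma exists_minimal_cover [IsLocalRing R] (X : Type u) [AddCommGroup X] [Module R X]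
    [Module.Finite R X] :
    ∃ (n : ℕ) (π : (Fin n → R) →ₗ[R] X), Function.Surjective π ∧
      LinearMap.ker π ≤ (IsLocalRing.maximalIdeal R) • (⊤ : Submodule R (Fin n → R)) := by
  classical
  obtain ⟨n₀, f₀, hf₀⟩ := Module.Finite.exists_fin' R X
  have hex : ∃ n, ∃ π : (Fin n → R) →ₗ[R] X, Function.Surjective π := ⟨n₀, f₀, hf₀⟩
  obtain ⟨π, hπ⟩ := Nat.find_spec hex
  refine ⟨Nat.find hex, π, hπ, ?_⟩
  intro v hv
  rw [LinearMap.mem_ker] at hv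
  rw [mem_smul_top_pi]
  by_contra hc
  push_neg at hc
  obtain ⟨i, hi⟩ := hc
  have hu : IsUnit (v i) := by
    by_contra h
    exact hi ((IsLocalRing.mem_maximalIdeal _).mpr h)
  obtain ⟨π', hπ'⟩ := drop_generator (Nat.find hex) π hπ v hv i hu
  have hle : Nat.find hex ≤ Nat.find hex - 1 := Nat.find_min' hex ⟨π', hπ'⟩
  have hpos : 0 < Nat.find hex := i.pos
  omega

/-- A stable module admits no surjective functional. -/
lemma not_surjective_of_stable {M : Type u} [AddCommGroup M] [Module R M] [Nontrivial R]
    (hst : IsStable R M) (g : M →ₗ[R] R) (hg : Function.Surjective g) : False := by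
  obtain ⟨z, hz⟩ := hg 1
  set s : R →ₗ[R] M := LinearMap.toSpanSingleton R M z with hs
  have hgs : ∀ r : R, g (s r) = r := fun r => by
    simp [hs, LinearMap.toSpanSingleton_apply, hz]
  have hsinj : Function.Injective s := fun a b hab => by
    have := congrArg g hab; rwa [hgs, hgs] at this
  have hcompl : IsCompl (LinearMap.range s) (LinearMap.ker g) := by
    constructor
    · rw [disjoint_iff]
      ext x
      simp only [Submodule.mem_inf, Submodule.mem_bot, LinearMap.mem_range, LinearMap.mem_ker]
      constructor
      · rintro ⟨⟨r, rfl⟩, hker⟩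
        rw [hgs] at hker; rw [hker, map_zero]
      · rintro rfl; exact ⟨⟨0, map_zero s⟩, map_zero g⟩
    · rw [codisjoint_iff, eq_top_iff]
      intro x _
      have : x = s (g x) + (x - s (g x)) := by abel
      rw [this]
      exact Submodule.add_mem_sup (LinearMap.mem_range_self s (g x))
        (by simp [LinearMap.mem_ker, hgs])
  have hfree : Module.Free R ↥(LinearMap.range s) :=
    Module.Free.of_equiv (LinearEquiv.ofInjective s hsinj)
  have hbot := hst _ _ hcompl hfree
  have : s 1 ∈ LinearMap.range s := LinearMap.mem_range_self s 1
  rw [hbot, Submodule.mem_bot] at this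
  have := congrArg g this
  rw [hgs, map_zero] at this
  exact one_ne_zero this

/-- From a non-stable module, extract a surjective functional. -/
lemma exists_surjective_functional_of_not_stable {M : Type u} [AddCommGroup M] [Module R M]
    (h : ¬ IsStable R M) : ∃ g : M →ₗ[R] R, Function.Surjective g := by
  rw [IsStable] at h
  push_neg at h
  obtain ⟨N, N', hcompl, hfree, hne⟩ := h
  obtain ⟨x, hxN, hx0⟩ := Submodule.exists_mem_ne_zero_of_ne_bot hne
  classical
  let b := hfree.chooseBasis
  have hx : (⟨x, hxN⟩ : N) ≠ 0 := fun h => hx0 (by simpa using congrArg Subtype.val h)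
  obtain ⟨i, hi⟩ : ∃ i, b.repr ⟨x, hxN⟩ i ≠ 0 := by
    by_contra hc
    push_neg at hc
    apply hx
    have : b.repr ⟨x, hxN⟩ = 0 := Finsupp.ext fun i => hc i
    simpa [this] using (b.repr.symm_apply_apply (⟨x, hxN⟩ : N)).symm
  refine ⟨(b.coord i) ∘ₗ (N.linearProjOfIsCompl N' hcompl), ?_⟩
  intro r
  refine ⟨r • (b i : M), ?_⟩
  have : N.linearProjOfIsCompl N' hcompl (b i : M) = b i :=
    Submodule.linearProjOfIsCompl_apply_left hcompl (b i)
  simp [map_smul, this, Module.Basis.coord_apply]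

end HLinkAux

set_option maxHeartbeats 1000000

/-- A finitely generated module `M` over a commutative Noetherian local ring is
horizontally linked iff `M` is stable and `M` is a first syzygy module. -/
theorem statement2 (R : Type u) [CommRing R] [IsNoetherianRing R] [IsLocalRing R]
    (M : Type u) [AddCommGroup M] [Module R M] [Module.Finite R M] :
    IsHorizontallyLinked R M ↔ (IsStable R M ∧ IsFirstSyzygy R M) := by
  classical
  constructor
  · rintro ⟨p, q, ⟨e⟩⟩
    constructor
    · -- stability
      intro N N' hcompl hfree
      by_contra hne
      obtain ⟨g, hg⟩ := HLinkAux.exists_surjective_functional_of_not_stable R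
        (fun hst => hne (hst N N' hcompl hfree))
      set h : Module.Dual R (Fin q.n0 → R) →ₗ[R] R :=
        g ∘ₗ (e.symm : q.Lambda →ₗ[R] M) ∘ₗ q.d.dualMap.rangeRestrict with hh
      set x : Fin q.n0 → R := fun i => h (HLinkAux.epsEquiv R q.n0 (Pi.single i 1)) with hxdef
      have hx : ∀ f : Module.Dual R (Fin q.n0 → R), h f = f x := by
        intro f
        obtain ⟨v, rfl⟩ := (HLinkAux.epsEquiv R q.n0).surjective f
        have h1 := HLinkAux.functional_eq_sum R
          (h ∘ₗ (HLinkAux.epsEquiv R q.n0).toLinearMap) v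
        simp only [LinearMap.comp_apply, LinearEquiv.coe_coe] at h1
        rw [h1, HLinkAux.epsEquiv_apply]
      have hπx : q.π x = 0 := by
        have hval : ∀ w : Fin p.n1 → R,
            ((q.π x : p.Lambda) : Module.Dual R (Fin p.n1 → R)) w = 0 := by
          intro w
          set gw : p.Lambda →ₗ[R] R :=
            ((Module.Dual.eval R (Fin p.n1 → R)) w) ∘ₗ
              (LinearMap.range p.d.dualMap).subtype with hgw
          set fw : Module.Dual R (Fin q.n0 → R) := gw ∘ₗ q.π with hfw
          have hker : q.d.dualMap fw = 0 := by
            apply LinearMap.ext; intro z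
            simp only [LinearMap.dualMap_apply, LinearMap.zero_apply, hfw,
              LinearMap.comp_apply]
            have hz0 : q.π (q.d z) = 0 := q.exact.apply_apply_eq_zero z
            rw [hz0, map_zero]
          have hcorfw : q.d.dualMap.rangeRestrict fw = 0 := by
            apply Subtype.ext
            have : ((q.d.dualMap.rangeRestrict fw : q.Lambda) :
                Module.Dual R (Fin q.n1 → R)) = q.d.dualMap fw := rfl
            rw [this, hker]; rfl
          have h0 : h fw = 0 := by
            rw [hh]
            simp only [LinearMap.comp_apply, hcorfw, map_zero, LinearEquiv.coe_coe]
          have h2 := hx fw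
          rw [h0] at h2
          have h3 : fw x = ((q.π x : p.Lambda) : Module.Dual R (Fin p.n1 → R)) w := by
            simp only [hfw, LinearMap.comp_apply, hgw, Module.Dual.eval_apply]
            rfl
          rw [← h3, ← h2]
        have hcoe : ((q.π x : p.Lambda) : Module.Dual R (Fin p.n1 → R)) = 0 :=
          LinearMap.ext hval
        exact Submodule.coe_eq_zero.mp hcoe
      have hxm : x ∈ (IsLocalRing.maximalIdeal R) • (⊤ : Submodule R (Fin q.n0 → R)) :=
        q.min0 (LinearMap.mem_ker.mpr hπx)
      obtain ⟨z, hz⟩ := hg 1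
      obtain ⟨f, hf⟩ := LinearMap.surjective_rangeRestrict q.d.dualMap (e z)
      have h1 : h f = 1 := by
        rw [hh]
        simp only [LinearMap.comp_apply, LinearEquiv.coe_coe, hf,
          LinearEquiv.symm_apply_apply, hz]
      rw [hx f] at h1
      have hm : f x ∈ IsLocalRing.maximalIdeal R :=
        HLinkAux.apply_mem_of_mem_smul_top R f hxm
      rw [h1] at hm
      exact (IsLocalRing.maximalIdeal.isMaximal R).ne_top
        (Ideal.eq_top_of_isUnit_mem _ hm isUnit_one)
    · -- syzygy
      refine ⟨q.n1, ((HLinkAux.epsEquiv R q.n1).symm :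
          Module.Dual R (Fin q.n1 → R) →ₗ[R] (Fin q.n1 → R)) ∘ₗ
          (LinearMap.range q.d.dualMap).subtype ∘ₗ (e : M →ₗ[R] q.Lambda), ?_⟩
      rw [LinearMap.coe_comp, LinearMap.coe_comp]
      exact ((HLinkAux.epsEquiv R q.n1).symm.injective.comp
        Subtype.val_injective).comp e.injective
  · rintro ⟨hst, k, inj, hinj⟩
    obtain ⟨n0, π, hπs, hπmin⟩ := HLinkAux.exists_minimal_cover R M
    haveI : Module.Finite R ↥(LinearMap.ker π) :=
      Module.Finite.iff_fg.mpr (IsNoetherian.noetherian _)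
    obtain ⟨n1, ρ, hρs, hρmin⟩ := HLinkAux.exists_minimal_cover R ↥(LinearMap.ker π)
    set d : (Fin n1 → R) →ₗ[R] (Fin n0 → R) := (LinearMap.ker π).subtype ∘ₗ ρ with hd
    have hranged : LinearMap.range d = LinearMap.ker π := by
      rw [hd, LinearMap.range_comp, LinearMap.range_eq_top.mpr hρs, Submodule.map_top,
        Submodule.range_subtype]
    have hkerd : LinearMap.ker d = LinearMap.ker ρ := by
      rw [hd, LinearMap.ker_comp, Submodule.ker_subtype, Submodule.comap_bot]
    have hexact : Function.Exact d π := LinearMap.exact_iff.mpr hranged.symm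
    set p : MinFreePres R M := ⟨n0, n1, d, π, hπs, hexact, hπmin,
      (by rw [hkerd]; exact hρmin)⟩ with hp
    set ε0 := HLinkAux.epsEquiv R n0 with hε0
    set qπ : (Fin n0 → R) →ₗ[R] ↥(LinearMap.range d.dualMap) :=
      d.dualMap.rangeRestrict ∘ₗ ε0.toLinearMap with hqπ
    have hqπs : Function.Surjective qπ := by
      rw [hqπ, LinearMap.coe_comp, LinearEquiv.coe_coe]
      exact (LinearMap.surjective_rangeRestrict d.dualMap).comp ε0.surjective
    have hval : ∀ y : Fin n0 → R,
        ((qπ y : ↥(LinearMap.range d.dualMap)) : Module.Dual R (Fin n1 → R))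
          = d.dualMap (ε0 y) := fun y => rfl
    have hqmin : LinearMap.ker qπ ≤
        (IsLocalRing.maximalIdeal R) • (⊤ : Submodule R (Fin n0 → R)) := by
      intro y hy
      rw [LinearMap.mem_ker] at hy
      rw [HLinkAux.mem_smul_top_pi]
      by_contra hc
      push_neg at hc
      obtain ⟨i, hi⟩ := hc
      have hu : IsUnit (y i) := by
        by_contra h'
        exact hi ((IsLocalRing.mem_maximalIdeal _).mpr h')
      have hdm : d.dualMap (ε0 y) = 0 := by
        rw [← hval y, hy]; rfl
      have hvanish : LinearMap.ker π ≤ LinearMap.ker (ε0 y) := by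
        intro u hu'
        rw [← hranged] at hu'
        obtain ⟨z, rfl⟩ := hu'
        rw [LinearMap.mem_ker]
        have : ε0 y (d z) = (d.dualMap (ε0 y)) z := rfl
        rw [this, hdm]; rfl
      set g' := (LinearMap.ker π).liftQ (ε0 y) hvanish with hg'
      set eqv := π.quotKerEquivOfSurjective hπs with heqv
      set g : M →ₗ[R] R := g' ∘ₗ (eqv.symm : M →ₗ[R] _) with hgdef
      have hkey : ∀ w, g (π w) = ε0 y w := by
        intro w
        have h1 : eqv (Submodule.Quotient.mk w) = π w := by
          simp [heqv, LinearMap.quotKerEquivOfSurjective]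
        have h2 : eqv.symm (π w) = Submodule.Quotient.mk w := by
          rw [← h1, LinearEquiv.symm_apply_apply]
        rw [hgdef]
        simp only [LinearMap.comp_apply, LinearEquiv.coe_coe]
        rw [h2, hg']
        simp [Submodule.liftQ_apply]
      have hgs : Function.Surjective g := by
        intro r
        refine ⟨π ((r * ((hu.unit⁻¹ : Rˣ) : R)) • (Pi.single i (1:R) : Fin n0 → R)), ?_⟩
        rw [hkey, map_smul, smul_eq_mul, HLinkAux.epsEquiv_single,
          mul_assoc, hu.val_inv_mul, mul_one]
      exact HLinkAux.not_surjective_of_stable R hst g hgs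
    haveI : Module.Finite R ↥(LinearMap.ker qπ) :=
      Module.Finite.iff_fg.mpr (IsNoetherian.noetherian _)
    obtain ⟨n1', ρ', hρ's, hρ'min⟩ := HLinkAux.exists_minimal_cover R ↥(LinearMap.ker qπ)
    set qd : (Fin n1' → R) →ₗ[R] (Fin n0 → R) := (LinearMap.ker qπ).subtype ∘ₗ ρ' with hqd
    have hrangeqd : LinearMap.range qd = LinearMap.ker qπ := by
      rw [hqd, LinearMap.range_comp, LinearMap.range_eq_top.mpr hρ's, Submodule.map_top,
        Submodule.range_subtype]
    have hkerqd : LinearMap.ker qd = LinearMap.ker ρ' := by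
      rw [hqd, LinearMap.ker_comp, Submodule.ker_subtype, Submodule.comap_bot]
    have hqexact : Function.Exact qd qπ := LinearMap.exact_iff.mpr hrangeqd.symm
    set q : MinFreePres R ↥(LinearMap.range d.dualMap) := ⟨n0, n1', qd, qπ, hqπs, hqexact,
      hqmin, (by rw [hkerqd]; exact hρ'min)⟩ with hq
    set Φ : (Fin n0 → R) →ₗ[R] Module.Dual R (Fin n1' → R) :=
      qd.dualMap ∘ₗ ε0.toLinearMap with hΦ
    have hΦval : ∀ y, Φ y = qd.dualMap (ε0 y) := fun y => rfl
    have hΦrange : LinearMap.range Φ = LinearMap.range qd.dualMap := by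
      rw [hΦ, LinearMap.range_comp, LinearEquiv.range, Submodule.map_top]
    have hΦker : LinearMap.ker Φ = LinearMap.ker π := by
      ext y
      simp only [LinearMap.mem_ker]
      constructor
      · intro hy
        have hy' : ∀ z, ε0 y (qd z) = 0 := by
          intro z
          have h1 : ε0 y (qd z) = (qd.dualMap (ε0 y)) z := rfl
          rw [h1, ← hΦval, hy]; rfl
        have hcoord : ∀ ℓ : Fin k, inj (π y) ℓ = 0 := by
          intro ℓ
          set f : Module.Dual R (Fin n0 → R) :=
            (LinearMap.proj ℓ) ∘ₗ inj ∘ₗ π with hfdef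
          set v := ε0.symm f with hv
          have hvker : qπ v = 0 := by
            apply Submodule.coe_eq_zero.mp
            have h1 : ((qπ v : ↥(LinearMap.range d.dualMap)) :
                Module.Dual R (Fin n1 → R)) = d.dualMap (ε0 v) := hval v
            have h2 : ε0 v = f := by rw [hv]; exact ε0.apply_symm_apply f
            have h3 : d.dualMap f = 0 := by
              apply LinearMap.ext; intro z
              simp only [LinearMap.dualMap_apply, hfdef, LinearMap.comp_apply,
                LinearMap.zero_apply]
              have : π (d z) = 0 := hexact.apply_apply_eq_zero z
              rw [this, map_zero, map_zero]
            rw [h1, h2, h3]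
          have hvmem : v ∈ LinearMap.range qd := by
            rw [hrangeqd]
            exact LinearMap.mem_ker.mpr hvker
          obtain ⟨z, hz⟩ := hvmem
          have h4 : ε0 y v = 0 := by rw [← hz]; exact hy' z
          rw [HLinkAux.epsEquiv_comm] at h4
          rw [hv, LinearEquiv.apply_symm_apply] at h4
          simpa [hfdef] using h4
        have hzero : inj (π y) = 0 := funext hcoord
        exact hinj (by rw [hzero, map_zero])
      · intro hy
        apply LinearMap.ext; intro z
        have h1 : Φ y z = ε0 y (qd z) := rfl
        rw [LinearMap.zero_apply, h1, HLinkAux.epsEquiv_comm]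
        have hzker : qπ (qd z) = 0 := by
          have hm : qd z ∈ LinearMap.range qd := LinearMap.mem_range_self qd z
          rw [hrangeqd] at hm
          exact LinearMap.mem_ker.mp hm
        have hdm : d.dualMap (ε0 (qd z)) = 0 := by
          rw [← hval (qd z), hzker]; rfl
        have hymem : y ∈ LinearMap.range d := by
          rw [hranged]
          exact LinearMap.mem_ker.mpr hy
        obtain ⟨w, hw⟩ := hymem
        rw [← hw]
        have h2 : ε0 (qd z) (d w) = (d.dualMap (ε0 (qd z))) w := rfl
        rw [h2, hdm]; rfl
    exact ⟨p, q, ⟨(π.quotKerEquivOfSurjective hπs).symm ≪≫ₗ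
      Submodule.quotEquivOfEq _ _ hΦker.symm ≪≫ₗ Φ.quotKerEquivRange ≪≫ₗ
      LinearEquiv.ofEq _ _ hΦrange⟩⟩
end
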